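/- arXiv:1606.02803 — 11 statements merged into one kernel-verified Lean document; each statement's English description precedes it below -/
import Mathlib

section
/- Let p be an odd prime and let m, t, d, n be positive integers with d·t = p^(m-1)·(p-1). Then ∑_{i≥0} ⌊d·n/((p-1)·p^i)⌋ ≥ m·⌊n/t⌋ + ∑_{i≥1} ⌊n/(t·p^i)⌋ + ∑_{i≥1} ⌊d/p^i⌋. -/
/-- Cross-multiplication criterion for natural division. -/
lemma nat_div_le_div_cross {a b c e : ℕ} (hb : 0 < b) (he : 0 < e)
    (h : a * e ≤ c * b) : a / b ≤ c / e := by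
  rw [Nat.le_div_iff_mul_le he]
  have h1 : a / b * e * b ≤ c * b := by
    calc a / b * e * b = a / b * b * e := by ring
    _ ≤ a * e := Nat.mul_le_mul_right e (Nat.div_mul_le_self a b)
    _ ≤ c * b := h
  exact Nat.le_of_mul_le_mul_right h1 hb

/-- Superadditivity of natural division in the numerator. -/
lemma nat_div_add_div_le (a b c : ℕ) (hc : 0 < c) : a / c + b / c ≤ (a + b) / c := by
  rw [Nat.le_div_iff_mul_le hc, add_mul]
  exact Nat.add_le_add (Nat.div_mul_le_self a c) (Nat.div_mul_le_self b c)

/-- Numerical content of Lemma 4.2 (Minkowski bound comparison for odd `p`):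
if `d * t = p ^ (m-1) * (p-1)`, then
`r(GL(dn)_ℚ, p) ≥ r(GL(n)_K, p) + r(S_d, p)`. -/
theorem minkowski_imprimitive_le
    (p m t d n : ℕ) (hp : p.Prime) (hodd : Odd p)
    (hm : 0 < m) (ht : 0 < t) (hd : 0 < d) (hn : 0 < n)
    (hdt : d * t = p ^ (m - 1) * (p - 1)) :
    ∑ i ∈ Finset.range (d * n + 1), d * n / ((p - 1) * p ^ i) ≥
      m * (n / t) + (∑ i ∈ Finset.range (n + 1), n / (t * p ^ (i + 1))) +
        ∑ i ∈ Finset.range (d + 1), d / p ^ (i + 1) := by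
  have hp2 : 2 ≤ p := hp.two_le
  have hp1 : 1 ≤ p - 1 := by omega
  set f : ℕ → ℕ := fun i => d * n / ((p - 1) * p ^ i) with hf
  -- extend LHS to a longer range: extra terms vanish
  have hext : ∀ i, d * n + 1 ≤ i → f i = 0 := by
    intro i hi
    apply Nat.div_eq_of_lt
    calc d * n < 2 ^ i := lt_of_lt_of_le (Nat.lt_two_pow_self (n := d * n)) (Nat.pow_le_pow_right (by norm_num) (by omega))
    _ ≤ p ^ i := Nat.pow_le_pow_left hp2 i
    _ ≤ (p - 1) * p ^ i := Nat.le_mul_of_pos_left _ (by omega)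
  have hbig : ∑ i ∈ Finset.range (d * n + 1), f i
      = ∑ i ∈ Finset.range (m + (n + 1) + (d * n + 1)), f i := by
    apply Finset.sum_subset (Finset.range_subset_range.mpr (by omega))
    intro i _ hi
    exact hext i (by simp at hi; omega)
  rw [hbig]
  have hmono : ∑ i ∈ Finset.range (m + (n + 1)), f i
      ≤ ∑ i ∈ Finset.range (m + (n + 1) + (d * n + 1)), f i :=
    Finset.sum_le_sum_of_subset (Finset.range_subset_range.mpr (by omega))
  refine le_trans ?_ hmono
  conv_rhs => rw [Finset.sum_range_add]
  -- middle block equals the second sum exactly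
  have hmid : ∀ i, f (m + i) = n / (t * p ^ (i + 1)) := by
    intro i
    have hpe : (p - 1) * p ^ (m + i) = d * (t * p ^ (i + 1)) := by
      have h : m + i = (m - 1) + (i + 1) := by omega
      calc (p - 1) * p ^ (m + i) = p ^ (m - 1) * (p - 1) * p ^ (i + 1) := by
            rw [h, pow_add]; ring
      _ = d * t * p ^ (i + 1) := by rw [hdt]
      _ = d * (t * p ^ (i + 1)) := by ring
    show d * n / ((p - 1) * p ^ (m + i)) = n / (t * p ^ (i + 1))
    rw [hpe, Nat.mul_div_mul_left _ _ hd]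
  have hmid' : ∑ i ∈ Finset.range (n + 1), f (m + i)
      = ∑ i ∈ Finset.range (n + 1), n / (t * p ^ (i + 1)) :=
    Finset.sum_congr rfl fun i _ => hmid i
  rw [hmid']
  -- it remains to bound the first block
  have hdlt : ∀ j, m ≤ j → d / p ^ j = 0 := by
    intro j hj
    apply Nat.div_eq_of_lt
    have h0 : 0 < p ^ (m - 1) := Nat.pow_pos (by omega)
    have h1 : d ≤ p ^ (m - 1) * (p - 1) := by
      calc d ≤ d * t := Nat.le_mul_of_pos_right d ht
      _ = _ := hdt
    have hmp := Nat.mul_sub_one (p ^ (m - 1)) p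
    have h5 : 0 < p ^ (m - 1) * p := Nat.mul_pos h0 (by omega)
    have h3 : p ^ (m - 1) * p = p ^ m := by rw [← pow_succ]; congr 1; omega
    have h4 : p ^ m ≤ p ^ j := Nat.pow_le_pow_right (by omega) hj
    omega
  -- the d-sum is at most the truncated sum up to m-1
  have hdsum : ∑ i ∈ Finset.range (d + 1), d / p ^ (i + 1)
      ≤ ∑ i ∈ Finset.range (m - 1), d / p ^ (i + 1) := by
    rcases le_or_gt (d + 1) (m - 1) with h | h
    · exact Finset.sum_le_sum_of_subset (Finset.range_subset_range.mpr h)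
    · have : ∑ i ∈ Finset.range (d + 1), d / p ^ (i + 1)
          = ∑ i ∈ Finset.range (m - 1), d / p ^ (i + 1) := by
        symm
        apply Finset.sum_subset (Finset.range_subset_range.mpr (by omega))
        intro i _ hi
        exact hdlt (i + 1) (by simp at hi; omega)
      exact le_of_eq this
  -- rewrite first block terms: f i = n * p^(m-1-i) / t for i < m
  have hfirst : ∀ i, i < m → f i = n * p ^ (m - 1 - i) / t := by
    intro i hi
    have hpe : (p - 1) * p ^ i * p ^ (m - 1 - i) = d * t := by
      rw [hdt]
      calc (p - 1) * p ^ i * p ^ (m - 1 - i) = p ^ (i + (m - 1 - i)) * (p - 1) := by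
            rw [pow_add]; ring
      _ = p ^ (m - 1) * (p - 1) := by congr 2; omega
    show d * n / ((p - 1) * p ^ i) = n * p ^ (m - 1 - i) / t
    have h1 : d * n / ((p - 1) * p ^ i)
        = d * n * p ^ (m - 1 - i) / ((p - 1) * p ^ i * p ^ (m - 1 - i)) := by
      rw [Nat.mul_div_mul_right _ _ (Nat.pow_pos (by omega))]
    rw [h1, hpe]
    have : d * n * p ^ (m - 1 - i) = d * (n * p ^ (m - 1 - i)) := by ring
    rw [this, Nat.mul_div_mul_left _ _ hd]
  have hfirst' : ∑ i ∈ Finset.range m, f i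
      = ∑ i ∈ Finset.range m, n * p ^ (m - 1 - i) / t :=
    Finset.sum_congr rfl fun i hi => hfirst i (Finset.mem_range.mp hi)
  -- reflect: ∑_{i<m} n p^(m-1-i)/t = ∑_{k<m} n p^k / t
  have hrefl : ∑ i ∈ Finset.range m, n * p ^ (m - 1 - i) / t
      = ∑ k ∈ Finset.range m, n * p ^ k / t := by
    rw [← Finset.sum_range_reflect]
    apply Finset.sum_congr rfl
    intro k hk
    congr 3
    have := Finset.mem_range.mp hk
    omega
  -- key pointwise bound for k ≥ 1
  have hkey : ∀ k, 1 ≤ k → k ≤ m - 1 → n / t + d / p ^ (m - k) ≤ n * p ^ k / t := by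
    intro k hk1 hkm
    have hstep : d / p ^ (m - k) ≤ (p ^ k - 1) * n / t := by
      apply nat_div_le_div_cross (Nat.pow_pos (by omega)) ht
      calc d * t = p ^ (m - 1) * (p - 1) := hdt
      _ = p ^ (k - 1) * (p - 1) * p ^ (m - k) := by
          rw [mul_comm (p ^ (k-1)) (p-1), mul_assoc, ← pow_add, mul_comm (p-1) _]
          congr 2
          omega
      _ ≤ (p ^ k - 1) * p ^ (m - k) := by
          apply Nat.mul_le_mul_right
          have h1 : p ^ (k - 1) * (p - 1) = p ^ k - p ^ (k - 1) := by
            have hmp := Nat.mul_sub_one (p ^ (k - 1)) p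
            have hpk : p ^ (k - 1) * p = p ^ k := by rw [← pow_succ]; congr 1; omega
            omega
          have h2 : 1 ≤ p ^ (k - 1) := Nat.one_le_pow _ _ (by omega)
          omega
      _ ≤ (p ^ k - 1) * n * p ^ (m - k) := by
          rw [mul_assoc, mul_comm n _, ← mul_assoc]
          exact Nat.le_mul_of_pos_right _ hn
    calc n / t + d / p ^ (m - k) ≤ n / t + (p ^ k - 1) * n / t := Nat.add_le_add_left hstep _
    _ ≤ (n + (p ^ k - 1) * n) / t := nat_div_add_div_le _ _ _ ht
    _ = n * p ^ k / t := by
        congr 1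
        have h2 : 1 ≤ p ^ k := Nat.one_le_pow _ _ (by omega)
        have : n + (p ^ k - 1) * n = n * p ^ k := by
          rw [Nat.sub_mul, one_mul, mul_comm n _]
          have : n ≤ p ^ k * n := Nat.le_mul_of_pos_left _ h2
          omega
        rw [this]
  -- assemble the first block bound
  have hblock : m * (n / t) + ∑ i ∈ Finset.range (m - 1), d / p ^ (i + 1)
      ≤ ∑ k ∈ Finset.range m, n * p ^ k / t := by
    obtain ⟨m', rfl⟩ : ∃ m', m = m' + 1 := ⟨m - 1, by omega⟩
    rw [Finset.sum_range_succ']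
    simp only [Nat.add_sub_cancel, pow_zero, mul_one]
    have hpt : ∀ k ∈ Finset.range m', n / t + d / p ^ (m' - k) ≤ n * p ^ (k + 1) / t := by
      intro k hk
      have hkm := Finset.mem_range.mp hk
      have := hkey (k + 1) (by omega) (by omega)
      have hh : m' + 1 - (k + 1) = m' - k := by omega
      rwa [hh] at this
    have hsum : ∑ k ∈ Finset.range m', (n / t + d / p ^ (m' - k))
        ≤ ∑ k ∈ Finset.range m', n * p ^ (k + 1) / t :=
      Finset.sum_le_sum hpt
    rw [Finset.sum_add_distrib, Finset.sum_const, Finset.card_range, smul_eq_mul] at hsum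
    have hrefl2 : ∑ k ∈ Finset.range m', d / p ^ (m' - k)
        = ∑ i ∈ Finset.range m', d / p ^ (i + 1) := by
      rw [← Finset.sum_range_reflect]
      apply Finset.sum_congr rfl
      intro k hk
      congr 2
      have := Finset.mem_range.mp hk
      omega
    rw [hrefl2] at hsum
    have : (m' + 1) * (n / t) = n / t + m' * (n / t) := by ring
    omega
  rw [hfirst', hrefl]
  have := hdsum
  omega
end

section
/- Let p be an odd prime and let n, d be integers with n > 1 and d > 1. If ∑_{i≥0} ⌊d·n/((p-1)·p^i)⌋ > 0 (equivalently, d·n ≥ p-1), then ∑_{i≥0} ⌊d·n/((p-1)·p^i)⌋ > ∑_{i≥0} ⌊n/((p-1)·p^i)⌋ + ∑_{i≥1} ⌊d/p^i⌋. -/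
/-- Termwise bound: for `2 ≤ n, d`, `q = p-1 ≤ p`, each term of the big sum
dominates the sum of the corresponding terms. -/
lemma aux_termwise (p n d i : ℕ) (hp : 3 ≤ p) (hn : 2 ≤ n) (hd : 2 ≤ d) :
    n / ((p - 1) * p ^ i) + d / p ^ (i + 1) ≤ d * n / ((p - 1) * p ^ i) := by
  set q := p - 1 with hq
  have hq2 : 2 ≤ q := by omega
  have hqp : q ≤ p := by omega
  have hppos : 0 < p := by omega
  have hPpos : 0 < p ^ i := pow_pos hppos i
  have h1 : n / (q * p ^ i) = n * p / (q * p ^ i * p) :=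
    (Nat.mul_div_mul_right n (q * p ^ i) hppos).symm
  have h2 : d / p ^ (i + 1) = d * q / (q * p ^ i * p) := by
    rw [pow_succ]
    have : d * q / (q * p ^ i * p) = d * q / ((p ^ i * p) * q) := by ring_nf
    rw [this, Nat.mul_div_mul_right d (p ^ i * p) (by omega)]
  rw [h1, h2]
  calc n * p / (q * p ^ i * p) + d * q / (q * p ^ i * p)
      ≤ (n * p + d * q) / (q * p ^ i * p) := Nat.add_div_le_add_div _ _ _
    _ ≤ d * n * p / (q * p ^ i * p) := by
        apply Nat.div_le_div_right
        have h3 : d * q ≤ d * p := Nat.mul_le_mul_left d hqp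
        have h4 : n + d ≤ d * n := by nlinarith
        have h5 : (n + d) * p ≤ d * n * p := Nat.mul_le_mul_right p h4
        nlinarith
    _ = d * n / (q * p ^ i) := Nat.mul_div_mul_right _ _ hppos

/-- Strict bound at `i = 0`. -/
lemma aux_zero (p n d : ℕ) (hp : 3 ≤ p) (hn : 2 ≤ n) (hd : 2 ≤ d)
    (hdn : p - 1 ≤ d * n) :
    n / (p - 1) + d / p + 1 ≤ d * n / (p - 1) := by
  set q := p - 1 with hq
  have hq2 : 2 ≤ q := by omega
  have hqpos : 0 < q := by omega
  rcases Nat.eq_zero_or_pos (n / q) with ha | ha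
  · -- n < q
    rcases lt_or_ge d p with hdp | hdp
    · have : d / p = 0 := Nat.div_eq_of_lt hdp
      have : 1 ≤ d * n / q := (Nat.one_le_div_iff hqpos).mpr hdn
      omega
    · -- p ≤ d
      have h1 : d / p ≤ d / q := Nat.div_le_div_left (by omega) hqpos
      have h2 : 1 ≤ d / q := (Nat.one_le_div_iff hqpos).mpr (by omega)
      have h3 : 2 * (d / q) ≤ 2 * d / q := by
        rw [Nat.le_div_iff_mul_le hqpos]
        have := Nat.div_mul_le_self d q
        nlinarith [Nat.div_mul_le_self d q]
      have h4 : 2 * d / q ≤ d * n / q := by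
        apply Nat.div_le_div_right; nlinarith
      omega
  · -- 1 ≤ n / q
    have hdp2 : d / p ≤ d - 2 := by
      rcases lt_or_ge d p with hdp | hdp
      · have : d / p = 0 := Nat.div_eq_of_lt hdp
        omega
      · have h1 : d / p ≤ d / 3 := Nat.div_le_div_left hp (by omega)
        omega
    have h5 : d * (n / q) ≤ d * n / q := by
      rw [Nat.le_div_iff_mul_le hqpos]
      have := Nat.div_mul_le_self n q
      calc d * (n / q) * q = d * (n / q * q) := by ring
        _ ≤ d * n := Nat.mul_le_mul_left d (Nat.div_mul_le_self n q)
    have h6 : n / q + (d - 1) ≤ d * (n / q) := by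
      have : d * (n / q) = n / q + (d - 1) * (n / q) := by
        have hd1 : d = (d - 1) + 1 := by omega
        calc d * (n / q) = ((d - 1) + 1) * (n / q) := by rw [← hd1]
          _ = n / q + (d - 1) * (n / q) := by ring
      have h7 : d - 1 ≤ (d - 1) * (n / q) := Nat.le_mul_of_pos_right _ ha
      omega
    omega

/-- Corollary 4.4 in numerical form: for an odd prime `p` and `n, d > 1`, if
`r(GL(dn)_ℚ, p) > 0` then `r(GL(dn)_ℚ, p) > r(GL(n)_ℚ, p) + v_p(d!)`. -/
theorem minkowski_tensor_lt
    (p n d : ℕ) (hp : p.Prime) (hodd : Odd p) (hn : 1 < n) (hd : 1 < d)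
    (hpos : 0 < ∑ i ∈ Finset.range (d * n + 1), d * n / ((p - 1) * p ^ i)) :
    ∑ i ∈ Finset.range (d * n + 1), d * n / ((p - 1) * p ^ i) >
      (∑ i ∈ Finset.range (n + 1), n / ((p - 1) * p ^ i)) +
        ∑ i ∈ Finset.range (d + 1), d / p ^ (i + 1) := by
  have hp3 : 3 ≤ p := by
    have h2 := hp.two_le
    rcases Nat.lt_or_ge p 3 with h | h
    · interval_cases p
      exact absurd hodd (by decide)
    · exact h
  have hq2 : 2 ≤ p - 1 := by omega
  have hdn : p - 1 ≤ d * n := by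
    by_contra hlt
    push_neg at hlt
    have : ∑ i ∈ Finset.range (d * n + 1), d * n / ((p - 1) * p ^ i) = 0 := by
      apply Finset.sum_eq_zero
      intro i _
      apply Nat.div_eq_of_lt
      have h1 : 1 ≤ p ^ i := Nat.one_le_pow _ _ (by omega)
      calc d * n < p - 1 := hlt
        _ = (p - 1) * 1 := (mul_one _).symm
        _ ≤ (p - 1) * p ^ i := Nat.mul_le_mul_left _ h1
    omega
  -- extend the two small sums to range (d*n+1)
  have hsub1 : Finset.range (n + 1) ⊆ Finset.range (d * n + 1) := by
    apply Finset.range_subset_range.mpr; nlinarith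
  have hsub2 : Finset.range (d + 1) ⊆ Finset.range (d * n + 1) := by
    apply Finset.range_subset_range.mpr; nlinarith
  have hB : ∑ i ∈ Finset.range (n + 1), n / ((p - 1) * p ^ i)
      = ∑ i ∈ Finset.range (d * n + 1), n / ((p - 1) * p ^ i) := by
    apply Finset.sum_subset hsub1
    intro i _ hi
    simp only [Finset.mem_range, not_lt] at hi
    apply Nat.div_eq_of_lt
    calc n < 2 ^ n := Nat.lt_two_pow_self (n := n)
      _ ≤ 2 ^ i := Nat.pow_le_pow_right (by omega) (by omega)
      _ ≤ 2 * p ^ i := by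
          rcases i with _ | j
          · omega
          · calc 2 ^ (j + 1) = 2 * 2 ^ j := by ring
              _ ≤ 2 * p ^ j := by
                  apply Nat.mul_le_mul_left
                  exact Nat.pow_le_pow_left (by omega) j
              _ ≤ 2 * p ^ (j + 1) := by
                  apply Nat.mul_le_mul_left
                  exact Nat.pow_le_pow_right (by omega) (by omega)
      _ ≤ (p - 1) * p ^ i := Nat.mul_le_mul_right _ (by omega)
  have hC : ∑ i ∈ Finset.range (d + 1), d / p ^ (i + 1)
      = ∑ i ∈ Finset.range (d * n + 1), d / p ^ (i + 1) := by
    apply Finset.sum_subset hsub2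
    intro i _ hi
    simp only [Finset.mem_range, not_lt] at hi
    apply Nat.div_eq_of_lt
    calc d < 2 ^ d := Nat.lt_two_pow_self (n := d)
      _ ≤ 2 ^ (i + 1) := Nat.pow_le_pow_right (by omega) (by omega)
      _ ≤ p ^ (i + 1) := Nat.pow_le_pow_left (by omega) _
  rw [hB, hC, ← Finset.sum_add_distrib]
  apply Finset.sum_lt_sum
  · intro i _
    exact aux_termwise p n d i hp3 hn hd
  · refine ⟨0, Finset.mem_range.mpr (by omega), ?_⟩
    have := aux_zero p n d hp3 hn hd hdn
    simp only [pow_zero, mul_one, zero_add, pow_one] at *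
    omega
end

section
/- Let n, d be integers with n > 1 and d > 1 such that d·n is even. Then d·n + ∑_{i≥2} ⌊d·n/2^i⌋ ≥ n + 2·⌊n/2⌋ + ∑_{i≥2} ⌊n/2^i⌋ + ∑_{i≥1} ⌊d/2^i⌋. -/
/-- Tail sum `∑_{i=1}^{K} ⌊m/2^i⌋` truncated at `K`. -/
def Ssum (m K : ℕ) : ℕ := ∑ i ∈ Finset.range K, m / 2 ^ (i + 1)

lemma Ssum_mono {a b : ℕ} (K : ℕ) (h : a ≤ b) : Ssum a K ≤ Ssum b K :=
  Finset.sum_le_sum fun _ _ => Nat.div_le_div_right h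

lemma Ssum_superadd (a b K : ℕ) : Ssum a K + Ssum b K ≤ Ssum (a + b) K := by
  rw [Ssum, Ssum, Ssum, ← Finset.sum_add_distrib]
  exact Finset.sum_le_sum fun i _ => Nat.add_div_le_add_div a b _

lemma Ssum_stab {m K K' : ℕ} (h : m ≤ K) (h' : K ≤ K') : Ssum m K' = Ssum m K := by
  refine (Finset.sum_subset (Finset.range_subset_range.2 h') ?_).symm
  intro i hi hni
  simp only [Finset.mem_range, not_lt] at hi hni
  exact Nat.div_eq_of_lt (lt_of_le_of_lt (h.trans hni) (lt_of_lt_of_le (Nat.lt_two_pow_self (n := i))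
    (Nat.pow_le_pow_right (by norm_num) (Nat.le_succ i))))

lemma Ssum_congr {m K K' : ℕ} (h : m ≤ K) (h' : m ≤ K') : Ssum m K = Ssum m K' := by
  rcases le_total K K' with hle | hle
  · exact (Ssum_stab h hle).symm
  · exact Ssum_stab h' hle

lemma Ssum_one (K : ℕ) : Ssum 1 K = 0 :=
  Finset.sum_eq_zero fun i _ => Nat.div_eq_of_lt (Nat.one_lt_two_pow_iff.2 (Nat.succ_ne_zero i))

lemma two_mul_div_pow (e i : ℕ) : 2 * e / 2 ^ (i + 1 + 1) = e / 2 ^ (i + 1) := by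
  rw [pow_succ', Nat.mul_div_mul_left _ _ (by norm_num : (0:ℕ) < 2)]

lemma Ssum_two_mul (e K : ℕ) (he : 2 * e ≤ K) : Ssum (2 * e) K = e + Ssum e K := by
  have h1 : Ssum (2 * e) K = Ssum (2 * e) (K + 1) := (Ssum_stab he (Nat.le_succ K)).symm
  rw [h1, Ssum, Ssum, Finset.sum_range_succ']
  simp only [two_mul_div_pow]
  have h2 : 2 * e / 2 ^ (0 + 1) = e := by norm_num
  rw [h2]
  exact add_comm _ _

/-- Inequality of Lemma 4.6: for `n, d > 1` with `d * n` even and `g = d * n / 2`,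
`r(GL(g)_{ℚ(i)}, 2) ≥ r(GL(n)_ℚ, 2) + r(S_d, 2)`. -/
theorem minkowski_two_imprimitive_le
    (n d : ℕ) (hn : 1 < n) (hd : 1 < d) (he : Even (d * n)) :
    d * n + (∑ i ∈ Finset.range (d * n + 1), d * n / 2 ^ (i + 2)) ≥
      n + 2 * (n / 2) + (∑ i ∈ Finset.range (n + 1), n / 2 ^ (i + 2)) +
        ∑ i ∈ Finset.range (d + 1), d / 2 ^ (i + 1) := by
  have hdndiv : ∀ i, d * n / 2 ^ (i + 2) = (d * n / 2) / 2 ^ (i + 1) := by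
    intro i; rw [Nat.div_div_eq_div_mul, ← pow_succ']
  have hndiv : ∀ i, n / 2 ^ (i + 2) = (n / 2) / 2 ^ (i + 1) := by
    intro i; rw [Nat.div_div_eq_div_mul, ← pow_succ']
  have hnK : n ≤ d * n := by nlinarith
  have hdK : d ≤ d * n := by nlinarith
  have h1 : (∑ i ∈ Finset.range (d * n + 1), d * n / 2 ^ (i + 2))
      = Ssum (d * n / 2) (d * n) := by
    simp only [hdndiv]
    exact Ssum_stab (Nat.div_le_self _ _) (Nat.le_succ _)
  have h2 : (∑ i ∈ Finset.range (n + 1), n / 2 ^ (i + 2)) = Ssum (n / 2) (d * n) := by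
    simp only [hndiv]
    exact Ssum_congr ((Nat.div_le_self n 2).trans (Nat.le_succ n))
      ((Nat.div_le_self n 2).trans hnK)
  have h3 : (∑ i ∈ Finset.range (d + 1), d / 2 ^ (i + 1)) = Ssum d (d * n) :=
    Ssum_congr (Nat.le_succ d) hdK
  rw [h1, h2, h3]
  rcases Nat.even_or_odd n with ⟨m, hm⟩ | ⟨m, hm⟩
  · -- n = m + m even
    have hm1 : 1 ≤ m := by omega
    have hdm : d * n = 2 * (d * m) := by rw [hm]; ring
    have hg : d * n / 2 = d * m := by omega
    have hn2 : n / 2 = m := by omega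
    rw [hg, hn2]
    have hsum : Ssum m (d * n) + Ssum d (d * n) ≤ Ssum (d * m) (d * n) := by
      rcases eq_or_lt_of_le hm1 with h | h
      · rw [← h, Ssum_one, mul_one, zero_add]
      · calc Ssum m (d * n) + Ssum d (d * n) ≤ Ssum (m + d) (d * n) := Ssum_superadd m d _
          _ ≤ Ssum (d * m) (d * n) := Ssum_mono _ (by nlinarith)
    have hnum : n + 2 * m ≤ d * n := by nlinarith
    omega
  · -- n = 2m+1 odd, so d is even
    have hde : ∃ e, d = 2 * e := by
      rcases he with ⟨k, hk⟩
      rcases Nat.even_or_odd d with ⟨e, hed⟩ | ⟨e, hed⟩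
      · exact ⟨e, by omega⟩
      · exfalso
        have : d * n = 2 * (2 * e * m + e + m) + 1 := by rw [hed, hm]; ring
        omega
    obtain ⟨e, hed⟩ := hde
    have he1 : 1 ≤ e := by omega
    have hden : d * n = 2 * (e * n) := by rw [hed]; ring
    have hg : d * n / 2 = e * n := by omega
    have hn2 : n / 2 = m := by omega
    have hS2e : Ssum d (d * n) = e + Ssum e (d * n) := by
      rw [hed]; exact Ssum_two_mul e _ (by rw [← hed]; exact hdK)
    rw [hg, hn2, hS2e]
    have h5 : e * n = 2 * (e * m) + e := by rw [hm]; ring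
    have hem : m ≤ e * m := by nlinarith
    have hsum : Ssum m (d * n) + Ssum e (d * n) ≤ Ssum (e * n) (d * n) := by
      calc Ssum m (d * n) + Ssum e (d * n) ≤ Ssum (m + e) (d * n) := Ssum_superadd m e _
        _ ≤ Ssum (e * n) (d * n) := Ssum_mono _ (by omega)
    omega
end

section
/- Let n, d be integers with n > 1 and d > 1 such that d·n is even. Then equality d·n + ∑_{i≥2} ⌊d·n/2^i⌋ = n + 2·⌊n/2⌋ + ∑_{i≥2} ⌊n/2^i⌋ + ∑_{i≥1} ⌊d/2^i⌋ holds if and only if n = 2 and d = 2. -/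
/-- Binary digit sum. -/
def sb (m : ℕ) : ℕ := (Nat.digits 2 m).sum

lemma sb_rec (m : ℕ) (h : m ≠ 0) : sb m = m % 2 + sb (m / 2) := by
  unfold sb
  rw [Nat.digits_def' (by norm_num : 1 < 2) (Nat.pos_of_ne_zero h)]
  simp

lemma legendre : ∀ k m : ℕ, m < 2 ^ (k+1) →
    (∑ i ∈ Finset.range k, m / 2 ^ (i+1)) + sb m = m := by
  intro k
  induction k with
  | zero => intro m hm; interval_cases m <;> simp [sb]
  | succ k ih =>
    intro m hm
    rcases Nat.eq_zero_or_pos m with rfl | hm0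
    · simp [sb]
    rw [Finset.sum_range_succ']
    have hstep : ∀ i : ℕ, m / 2 ^ (i + 1 + 1) = (m / 2) / 2 ^ (i + 1) := by
      intro i
      rw [Nat.div_div_eq_div_mul, ← pow_succ']
    simp only [hstep, pow_one]
    have hlt : m / 2 < 2 ^ (k + 1) := by
      apply Nat.div_lt_of_lt_mul
      rw [← pow_succ']
      exact hm
    have := ih (m / 2) hlt
    have hr := sb_rec m (by omega)
    omega

lemma sb_pos : ∀ m : ℕ, 1 ≤ m → 1 ≤ sb m := by
  intro m
  induction m using Nat.strong_induction_on with
  | _ m ih =>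
    intro hm
    rw [sb_rec m (by omega)]
    rcases Nat.eq_zero_or_pos (m % 2) with h | h
    · have h1 : 1 ≤ m / 2 := by omega
      have := ih (m / 2) (by omega) h1
      omega
    · omega

lemma sb_le (m : ℕ) (h : m ≠ 0) : sb m ≤ Nat.log 2 m + 1 := by
  have hlen : (Nat.digits 2 m).length = Nat.log 2 m + 1 := Nat.digits_len 2 m (by norm_num) h
  have : sb m ≤ (Nat.digits 2 m).length * 1 := by
    unfold sb
    apply List.sum_le_card_nsmul
    intro x hx
    have := Nat.digits_lt_base (by norm_num) hx
    omega
  omega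

lemma log_le (m : ℕ) : Nat.log 2 m ≤ m / 8 + 2 := by
  rcases Nat.eq_zero_or_pos m with rfl | h
  · simp
  have h2 : m / 8 < 2 ^ (m / 8) := Nat.lt_two_pow_self
  have h3 : 2 ^ (m / 8 + 3) = 8 * 2 ^ (m / 8) := by rw [pow_add]; ring
  have h1 : m < 2 ^ (m / 8 + 3) := by omega
  have := Nat.log_lt_of_lt_pow h.ne' h1
  omega

lemma sum_shift (m k : ℕ) (h : m < 2 ^ (k + 2)) :
    m / 2 + (∑ i ∈ Finset.range k, m / 2 ^ (i + 2)) + sb m = m := by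
  have h1 := legendre (k + 1) m h
  rw [Finset.sum_range_succ'] at h1
  simp only [pow_one, show ∀ i : ℕ, i + 1 + 1 = i + 2 from fun i => rfl] at h1
  omega

lemma lt_pow_shift (m j : ℕ) : m < 2 ^ (m + j + 1) := by
  calc m < 2 ^ m := Nat.lt_two_pow_self
  _ ≤ 2 ^ (m + j + 1) := Nat.pow_le_pow_right (by norm_num) (by omega)

lemma final (n d m A B C a b c : ℕ)
    (hm2 : m % 2 = 0) (hbig : 25 ≤ m)
    (hkey : 10*n + 4*d ≤ 5*m + 8)
    (hA : m/2 + A + c = m) (hB : n/2 + B + a = n) (hC : C + b = d)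
    (ha : 1 ≤ a) (hb : 1 ≤ b) (hc : c ≤ m/8 + 3)
    (E : m + A = n + 2*(n/2) + B + C) : False := by omega

/-- Equality case of Lemma 4.6: for `n, d > 1` with `d * n` even, equality in the
2-adic Minkowski comparison holds if and only if `n = 2` and `d = 2`. -/
theorem minkowski_two_imprimitive_eq_iff
    (n d : ℕ) (hn : 1 < n) (hd : 1 < d) (he : Even (d * n)) :
    (d * n + (∑ i ∈ Finset.range (d * n + 1), d * n / 2 ^ (i + 2)) =
      n + 2 * (n / 2) + (∑ i ∈ Finset.range (n + 1), n / 2 ^ (i + 2)) +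
        ∑ i ∈ Finset.range (d + 1), d / 2 ^ (i + 1)) ↔ (n = 2 ∧ d = 2) := by
  constructor
  · intro E
    by_contra hcon
    have hmod : d * n % 2 = 0 := Nat.even_iff.mp he
    rcases le_or_gt (d * n) 24 with hsmall | hbig
    · -- finitely many exceptional cases
      have hn12 : n ≤ 12 := by
        have : 2 * n ≤ d * n := Nat.mul_le_mul_right n hd
        omega
      have hd12 : d ≤ 12 := by
        have : d * 2 ≤ d * n := Nat.mul_le_mul_left d hn
        omega
      interval_cases n <;> interval_cases d <;>
        first
          | exact hcon ⟨rfl, rfl⟩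
          | omega
          | (revert E; decide)
    · -- large case
      have hA := sum_shift (d * n) (d * n + 1) (lt_pow_shift (d * n) 2)
      have hB := sum_shift n (n + 1) (lt_pow_shift n 2)
      have hC := legendre (d + 1) d (lt_pow_shift d 1)
      have ha : 1 ≤ sb n := sb_pos n (by omega)
      have hb : 1 ≤ sb d := sb_pos d (by omega)
      have hc : sb (d * n) ≤ d * n / 8 + 3 := by
        have h1 := sb_le (d * n) (by positivity)
        have h2 := log_le (d * n)
        omega
      have hkey : 10 * n + 4 * d ≤ 5 * (d * n) + 8 := by
        have hdz : (2 : ℤ) ≤ (d : ℤ) := by exact_mod_cast hd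
        have hnz : (2 : ℤ) ≤ (n : ℤ) := by exact_mod_cast hn
        have h0 : (0 : ℤ) ≤ ((d : ℤ) - 2) * (5 * (n : ℤ) - 4) := by
          apply mul_nonneg <;> linarith
        have hexp : ((d : ℤ) - 2) * (5 * (n : ℤ) - 4) =
            5 * ((d : ℤ) * n) - 4 * d - 10 * n + 8 := by ring
        have : (10 : ℤ) * n + 4 * d ≤ 5 * ((d : ℤ) * n) + 8 := by
          rw [hexp] at h0; linarith
        exact_mod_cast this
      exact final n d (d * n) _ _ _ (sb n) (sb d) (sb (d * n))
        hmod (by omega) hkey hA hB hC ha hb hc E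
  · rintro ⟨rfl, rfl⟩
    decide
end

section
/- Let p be an odd prime and d ≥ 1 an integer. Then ∑_{i≥0} ⌊d/((p-1)·p^i)⌋ ≥ ∑_{i≥1} ⌊d/p^i⌋, and the inequality is strict whenever d ≥ p·(p-1). -/
/-- Base case used in the proof of Lemma 4.2: `r(GL(d)_ℚ, p) ≥ r(S_d, p) = v_p(d!)`,
with strict inequality for `d ≥ p * (p-1)`. -/
theorem minkowski_symmetric_le
    (p d : ℕ) (hp : p.Prime) (hodd : Odd p) (hd : 1 ≤ d) :
    ((∑ i ∈ Finset.range (d + 1), d / ((p - 1) * p ^ i)) ≥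
        ∑ i ∈ Finset.range (d + 1), d / p ^ (i + 1)) ∧
      (p * (p - 1) ≤ d →
        (∑ i ∈ Finset.range (d + 1), d / ((p - 1) * p ^ i)) >
          ∑ i ∈ Finset.range (d + 1), d / p ^ (i + 1)) := by
  have hp2 : 2 ≤ p := hp.two_le
  have hterm : ∀ i ∈ Finset.range (d + 1), d / p ^ (i + 1) ≤ d / ((p - 1) * p ^ i) := by
    intro i _
    apply Nat.div_le_div_left
    · have h := Nat.mul_le_mul_right (p ^ i) (Nat.sub_le p 1)
      simpa [pow_succ, mul_comm] using h
    · exact Nat.mul_pos (by omega) (pow_pos (by omega) i)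
  constructor
  · exact Finset.sum_le_sum hterm
  · intro hdp
    apply Finset.sum_lt_sum hterm
    refine ⟨0, Finset.mem_range.mpr (by omega), ?_⟩
    simp only [pow_zero, mul_one, zero_add, pow_one]
    -- show d / p < d / (p - 1)
    have hq : p - 1 ≤ d / p := Nat.le_div_iff_mul_le (by omega) |>.mpr (by
      rw [mul_comm]; exact hdp)
    have : d / p + 1 ≤ d / (p - 1) := by
      rw [Nat.le_div_iff_mul_le (by omega : 0 < p - 1)]
      have h1 : d / p * p ≤ d := Nat.div_mul_le_self d p
      obtain ⟨k, hk⟩ : ∃ k, p = k + 1 := ⟨p - 1, by omega⟩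
      subst hk
      simp only [Nat.add_sub_cancel] at *
      nlinarith
    omega
end

section
/- For a prime p and a positive integer g, define r(g,p) := ∑_{i≥0} ⌊2g/((p-1)·p^i)⌋, and define r'(g,p) := r(g,p) - g - 1 if p = 2, r'(g,p) := max{0, r(g,p) - 1} if p is a Fermat prime (i.e., p is an odd prime such that p - 1 is a power of 2), and r'(g,p) := r(g,p) otherwise. Then for every fixed prime p, the function g ↦ r'(g,p) is superadditive: for all positive integers g₁, g₂ one has r'(g₁+g₂, p) ≥ r'(g₁, p) + r'(g₂, p). -/
open scoped Classical

/-- The quantity `r(g,p)` from the introduction: `∑_{i≥0} ⌊2g/((p-1)p^i)⌋`. -/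
def minkowskiR (g p : ℕ) : ℕ :=
  ∑ i ∈ Finset.range (2 * g + 1), 2 * g / ((p - 1) * p ^ i)

/-- The refined exponent `r'(g,p)` of Theorem 1.2: `r(g,p) - g - 1` for `p = 2`,
`max 0 (r(g,p) - 1)` for `p` a Fermat prime, and `r(g,p)` otherwise. -/
noncomputable def minkowskiR' (g p : ℕ) : ℕ :=
  if p = 2 then minkowskiR g p - g - 1
  else if ∃ k : ℕ, p - 1 = 2 ^ k then max 0 (minkowskiR g p - 1)
  else minkowskiR g p

lemma minkowskiR_ge2 (g : ℕ) (hg : 0 < g) : g + 1 ≤ minkowskiR g 2 := by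
  have h : 2 * g / ((2 - 1) * 2 ^ 0) ≤ minkowskiR g 2 := by
    apply Finset.single_le_sum (f := fun i => 2 * g / ((2 - 1) * 2 ^ i))
    · intro i _; exact Nat.zero_le _
    · simp [Finset.mem_range]
  simp at h
  omega

lemma minkowskiR_superadd (p g₁ g₂ : ℕ) :
    minkowskiR g₁ p + minkowskiR g₂ p ≤ minkowskiR (g₁ + g₂) p := by
  unfold minkowskiR
  have key : ∀ g : ℕ, g ≤ g₁ + g₂ →
      ∑ i ∈ Finset.range (2 * g + 1), 2 * g / ((p - 1) * p ^ i)
        ≤ ∑ i ∈ Finset.range (2 * (g₁ + g₂) + 1), 2 * g / ((p - 1) * p ^ i) := by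
    intro g hg
    apply Finset.sum_le_sum_of_subset
    apply Finset.range_subset_range.2
    omega
  calc (∑ i ∈ Finset.range (2 * g₁ + 1), 2 * g₁ / ((p - 1) * p ^ i)) +
        ∑ i ∈ Finset.range (2 * g₂ + 1), 2 * g₂ / ((p - 1) * p ^ i)
      ≤ (∑ i ∈ Finset.range (2 * (g₁ + g₂) + 1), 2 * g₁ / ((p - 1) * p ^ i)) +
        ∑ i ∈ Finset.range (2 * (g₁ + g₂) + 1), 2 * g₂ / ((p - 1) * p ^ i) := by
        exact Nat.add_le_add (key g₁ (by omega)) (key g₂ (by omega))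
    _ = ∑ i ∈ Finset.range (2 * (g₁ + g₂) + 1),
          (2 * g₁ / ((p - 1) * p ^ i) + 2 * g₂ / ((p - 1) * p ^ i)) := by
        rw [Finset.sum_add_distrib]
    _ ≤ ∑ i ∈ Finset.range (2 * (g₁ + g₂) + 1), 2 * (g₁ + g₂) / ((p - 1) * p ^ i) := by
        apply Finset.sum_le_sum
        intro i _
        have := Nat.add_div_le_add_div (2 * g₁) (2 * g₂) ((p - 1) * p ^ i)
        have e : 2 * g₁ + 2 * g₂ = 2 * (g₁ + g₂) := by ring
        rwa [e] at this

/-- Superadditivity of `g ↦ r'(g,p)` for each fixed prime `p` (reduction step in the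
proof of Theorem 5.3). -/
theorem minkowskiR'_superadditive (p : ℕ) (hp : p.Prime) (g₁ g₂ : ℕ)
    (h₁ : 0 < g₁) (h₂ : 0 < g₂) :
    minkowskiR' (g₁ + g₂) p ≥ minkowskiR' g₁ p + minkowskiR' g₂ p := by
  have hsup := minkowskiR_superadd p g₁ g₂
  unfold minkowskiR'
  split_ifs with hp2 hf
  · subst hp2
    have e1 := minkowskiR_ge2 g₁ h₁
    have e2 := minkowskiR_ge2 g₂ h₂
    omega
  · simp only [Nat.zero_max]
    omega
  · omega
end

section
/- Let p be an odd prime, let n ≥ 1 be an integer, and set m := ⌊n/(p-1)⌋. Then there exists an injective group homomorphism from the wreath product C_p ≀ S_m — realized as the semidirect product of the group of functions Fin m → ZMod p (under pointwise addition) by the symmetric group Equiv.Perm (Fin m) acting by permuting coordinates — into the group GL(Fin n, ℚ) of invertible n × n rational matrices. -/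
open Matrix

/-- The action of the symmetric group on the group `Fin m → G` (written
multiplicatively via `Multiplicative`) by permuting coordinates:
`(σ • f) j = f (σ⁻¹ j)`. -/
def permCoordAut (m : ℕ) (G : Type*) [AddCommGroup G] :
    Equiv.Perm (Fin m) →* MulAut (Multiplicative (Fin m → G)) where
  toFun σ :=
    (MulEquiv.funMultiplicative (Fin m) G).trans
      ((MulEquiv.arrowCongr σ (MulEquiv.refl (Multiplicative G))).trans
        (MulEquiv.funMultiplicative (Fin m) G).symm)
  map_one' := by ext f; rfl
  map_mul' σ τ := by ext f; rfl

noncomputable section WreathAux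

namespace WreathAux

variable (p : ℕ) (hp : p.Prime) (m : ℕ)

/-- `p` as a positive natural. -/
def pp : ℕ+ := ⟨p, hp.pos⟩

/-- The `p`-th cyclotomic field over `ℚ`. -/
abbrev K := CyclotomicField (pp p hp) ℚ

instance : IsCyclotomicExtension {(pp p hp : ℕ)} ℚ (K p hp) := by
  convert CyclotomicField.isCyclotomicExtension (n := (pp p hp : ℕ)) (K := ℚ)
  · rfl
  · exact Subsingleton.elim _ _

/-- A primitive `p`-th root of unity, as a unit. -/
def zu : (K p hp)ˣ :=
  ((IsCyclotomicExtension.zeta_spec (pp p hp) ℚ (K p hp)).isUnit (pp p hp).ne_zero).unit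

lemma zu_prim : IsPrimitiveRoot (zu p hp) p :=
  (IsCyclotomicExtension.zeta_spec (pp p hp) ℚ (K p hp)).isUnit_unit (pp p hp).ne_zero

lemma zu_pow_p : zu p hp ^ p = 1 := (zu_prim p hp).pow_eq_one

/-- The character `ZMod p → Kˣ` sending `a` to `ζ^a`. -/
def chi : Multiplicative (ZMod p) →* (K p hp)ˣ where
  toFun a :=
    haveI : NeZero p := ⟨hp.pos.ne'⟩
    zu p hp ^ (Multiplicative.toAdd a).val
  map_one' := by
    haveI : NeZero p := ⟨hp.pos.ne'⟩
    simp
  map_mul' a b := by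
    haveI : NeZero p := ⟨hp.pos.ne'⟩
    simp only [toAdd_mul, ZMod.val_add, ← pow_add]
    rw [← pow_eq_pow_mod _ (zu_pow_p p hp)]

lemma chi_eq_one_iff (a : Multiplicative (ZMod p)) : chi p hp a = 1 ↔ a = 1 := by
  haveI : NeZero p := ⟨hp.pos.ne'⟩
  constructor
  · intro h
    have hd : p ∣ (Multiplicative.toAdd a).val := ((zu_prim p hp).pow_eq_one_iff_dvd _).1 h
    have hlt : (Multiplicative.toAdd a).val < p := ZMod.val_lt _
    have h0 : (Multiplicative.toAdd a).val = 0 := Nat.eq_zero_of_dvd_of_lt hd hlt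
    have : Multiplicative.toAdd a = 0 := by
      have := ZMod.val_cast_of_lt (show 0 < p from hp.pos)
      exact (ZMod.val_eq_zero _).1 h0
    simpa using this
  · rintro rfl
    simp [chi]

/-- The vector space `Fin m → K`. -/
abbrev W := Fin m → K p hp

/-- Scaling part of the representation. -/
def repScale : Multiplicative (Fin m → ZMod p) →* (W p hp m ≃ₗ[ℚ] W p hp m) where
  toFun f := LinearEquiv.piCongrRight fun j =>
    DistribMulAction.toLinearEquiv ℚ (K p hp) (chi p hp (Multiplicative.ofAdd ((Multiplicative.toAdd f) j)))
  map_one' := by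
    apply LinearEquiv.ext; intro v; funext j
    simp
  map_mul' f g := by
    apply LinearEquiv.ext; intro v; funext j
    show chi p hp (Multiplicative.ofAdd (Multiplicative.toAdd f j + Multiplicative.toAdd g j)) • v j
      = chi p hp (Multiplicative.ofAdd (Multiplicative.toAdd f j)) •
          (chi p hp (Multiplicative.ofAdd (Multiplicative.toAdd g j)) • v j)
    rw [ofAdd_add, _root_.map_mul, mul_smul]

/-- Permutation part of the representation. -/
def repPerm : Equiv.Perm (Fin m) →* (W p hp m ≃ₗ[ℚ] W p hp m) where
  toFun σ := LinearEquiv.funCongrLeft ℚ (K p hp) σ⁻¹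
  map_one' := by apply LinearEquiv.ext; intro v; rfl
  map_mul' σ τ := by apply LinearEquiv.ext; intro v; rfl

lemma rep_compat (σ : Equiv.Perm (Fin m)) :
    (repScale p hp m).comp ((permCoordAut m (ZMod p) σ)).toMonoidHom =
      (MulAut.conj (repPerm p hp m σ)).toMonoidHom.comp (repScale p hp m) := by
  refine MonoidHom.ext fun f => ?_
  apply LinearEquiv.ext
  intro v
  funext j
  show chi p hp (Multiplicative.ofAdd (Multiplicative.toAdd f (σ⁻¹ j))) • v j
    = chi p hp (Multiplicative.ofAdd (Multiplicative.toAdd f (σ⁻¹ j))) • v (σ (σ⁻¹ j))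
  rw [show σ (σ⁻¹ j) = j from (Equiv.eq_symm_apply σ).mp rfl]

/-- The representation of the wreath product on `W`. -/
def repW : (Multiplicative (Fin m → ZMod p)
      ⋊[permCoordAut m (ZMod p)] Equiv.Perm (Fin m)) →* (W p hp m ≃ₗ[ℚ] W p hp m) :=
  SemidirectProduct.lift (repScale p hp m) (repPerm p hp m) (rep_compat p hp m)

lemma repW_injective : Function.Injective (repW p hp m) := by
  rw [injective_iff_map_eq_one]
  rintro ⟨f, σ⟩ h
  have key : ∀ (v : W p hp m) (j : Fin m),
      ((chi p hp (Multiplicative.ofAdd (Multiplicative.toAdd f j)) : (K p hp)ˣ) : K p hp)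
        * v (σ⁻¹ j) = v j := by
    intro v j
    have h1 : (repW p hp m ⟨f, σ⟩) v = v := by rw [h]; rfl
    exact congrFun h1 j
  have hσ : ∀ k, σ k = k := by
    intro k
    by_contra hne
    have hk := key (Pi.single k (1 : K p hp)) (σ k)
    rw [show σ⁻¹ (σ k) = k from Equiv.Perm.inv_eq_iff_eq.mpr rfl, Pi.single_eq_same, mul_one,
      Pi.single_eq_of_ne hne] at hk
    exact Units.ne_zero _ hk
  have hf : ∀ k, Multiplicative.toAdd f k = 0 := by
    intro k
    have hinv : σ⁻¹ k = k := by
      rw [← hσ k, show σ⁻¹ (σ k) = k from Equiv.Perm.inv_eq_iff_eq.mpr rfl, hσ k]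
    have hk := key (Pi.single k (1 : K p hp)) k
    rw [hinv, Pi.single_eq_same, mul_one] at hk
    have : chi p hp (Multiplicative.ofAdd (Multiplicative.toAdd f k)) = 1 := Units.ext hk
    have := (chi_eq_one_iff p hp _).1 this
    simpa using this
  have hσ1 : σ = 1 := Equiv.ext hσ
  have hf1 : f = 1 := by
    have : Multiplicative.toAdd f = 0 := funext hf
    simpa using this
  rw [hσ1, hf1]
  rfl

/-- Extension of an automorphism of `M` to `M × N` by the identity. -/
def extendAut (R M N : Type*) [CommRing R] [AddCommGroup M] [AddCommGroup N]
    [Module R M] [Module R N] : (M ≃ₗ[R] M) →* ((M × N) ≃ₗ[R] (M × N)) where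
  toFun e := e.prodCongr (LinearEquiv.refl R N)
  map_one' := by apply LinearEquiv.ext; intro v; rfl
  map_mul' e₁ e₂ := by apply LinearEquiv.ext; intro v; rfl

lemma extendAut_injective (R M N : Type*) [CommRing R] [AddCommGroup M] [AddCommGroup N]
    [Module R M] [Module R N] : Function.Injective (extendAut R M N) := by
  intro e₁ e₂ h
  apply LinearEquiv.ext; intro v
  exact congrArg (fun (e : (M × N) ≃ₗ[R] (M × N)) => (e (v, 0)).1) h

/-- From automorphisms of an `n`-dimensional `ℚ`-vector space to `GL (Fin n) ℚ`. -/
def autToGL {V : Type*} [AddCommGroup V] [Module ℚ V] {n : ℕ} (b : Module.Basis (Fin n) ℚ V) :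
    (V ≃ₗ[ℚ] V) →* GL (Fin n) ℚ :=
  ((Units.mapEquiv (LinearMap.toMatrixAlgEquiv b).toRingEquiv.toMulEquiv).toMonoidHom).comp
    (LinearMap.GeneralLinearGroup.generalLinearEquiv ℚ V).symm.toMonoidHom

lemma autToGL_injective {V : Type*} [AddCommGroup V] [Module ℚ V] {n : ℕ}
    (b : Module.Basis (Fin n) ℚ V) : Function.Injective (autToGL b) :=
  (Units.mapEquiv (LinearMap.toMatrixAlgEquiv b).toRingEquiv.toMulEquiv).injective.comp
    (LinearMap.GeneralLinearGroup.generalLinearEquiv ℚ V).symm.injective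

end WreathAux

end WreathAux

/-- Remark 3.4: the wreath product `C_p ≀ S_{⌊n/(p-1)⌋}` embeds into `GL(n, ℚ)`. -/
theorem wreath_embeds_GL_rat (p : ℕ) (hp : p.Prime) (hodd : Odd p) (n : ℕ) (hn : 1 ≤ n) :
    ∃ f : (Multiplicative (Fin (n / (p - 1)) → ZMod p)
          ⋊[permCoordAut (n / (p - 1)) (ZMod p)] Equiv.Perm (Fin (n / (p - 1)))) →*
        GL (Fin n) ℚ,
      Function.Injective f := by
  classical
  set m := n / (p - 1) with hm
  haveI : FiniteDimensional ℚ (WreathAux.K p hp) :=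
    IsCyclotomicExtension.finiteDimensional {(WreathAux.pp p hp : ℕ)} ℚ (WreathAux.K p hp)
  have hfinK : Module.finrank ℚ (WreathAux.K p hp) = p - 1 := by
    rw [IsCyclotomicExtension.finrank (WreathAux.K p hp)
      (Polynomial.cyclotomic.irreducible_rat (WreathAux.pp p hp).pos)]
    simp [WreathAux.pp, Nat.totient_prime hp]
  have hfinW : Module.finrank ℚ (WreathAux.W p hp m) = m * (p - 1) := by
    rw [Module.finrank_pi_fintype, Finset.sum_const, Finset.card_univ, Fintype.card_fin,
      smul_eq_mul, hfinK]
  have hle : m * (p - 1) ≤ n := Nat.div_mul_le_self n (p - 1)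
  set V := (WreathAux.W p hp m) × (Fin (n - m * (p - 1)) → ℚ) with hV
  have hfinV : Module.finrank ℚ V = n := by
    show Module.finrank ℚ ((WreathAux.W p hp m) × (Fin (n - m * (p - 1)) → ℚ)) = n
    rw [Module.finrank_prod, hfinW, Module.finrank_fin_fun, Nat.add_sub_cancel' hle]
  let b : Module.Basis (Fin n) ℚ V := Module.finBasisOfFinrankEq ℚ V hfinV
  refine ⟨(WreathAux.autToGL b).comp
    ((WreathAux.extendAut ℚ (WreathAux.W p hp m) (Fin (n - m * (p - 1)) → ℚ)).comp
      (WreathAux.repW p hp m)), ?_⟩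
  exact (WreathAux.autToGL_injective b).comp
    ((WreathAux.extendAut_injective ℚ _ _).comp (WreathAux.repW_injective p hp m))
end

section
/- Let p be an odd prime, let q be a prime different from p, and let n ≥ 1 be an integer. Then the p-adic valuation of the order of the finite group GL(Fin n, ZMod q) satisfies v_p(|GL(n, 𝔽_q)|) ≥ ∑_{i≥0} ⌊n/((p-1)·p^i)⌋. -/
open Matrix

private lemma padicValNat_finset_prod {p : ℕ} [Fact p.Prime] {α : Type*} (s : Finset α)
    (f : α → ℕ) (hf : ∀ i ∈ s, f i ≠ 0) :
    padicValNat p (∏ i ∈ s, f i) = ∑ i ∈ s, padicValNat p (f i) := by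
  classical
  induction s using Finset.cons_induction with
  | empty => simp
  | cons a s ha ih =>
    rw [Finset.prod_cons, Finset.sum_cons,
      padicValNat.mul (hf _ (Finset.mem_cons_self _ _))
        (Finset.prod_ne_zero_iff.mpr fun i hi => hf _ (Finset.mem_cons_of_mem hi)),
      ih fun i hi => hf _ (Finset.mem_cons_of_mem hi)]

/-- Lower-bound half of the gcd computation in Remark 3.4: for odd primes `p ≠ q`,
`v_p(|GL(n, 𝔽_q)|) ≥ ∑_{i≥0} ⌊n/((p-1)p^i)⌋`. -/
theorem padicValNat_card_GL_ge
    (p q : ℕ) (hp : p.Prime) (hodd : Odd p) (hq : q.Prime) (hne : q ≠ p)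
    (n : ℕ) (hn : 1 ≤ n) :
    padicValNat p (Nat.card (GL (Fin n) (ZMod q))) ≥
      ∑ i ∈ Finset.range (n + 1), n / ((p - 1) * p ^ i) := by
  classical
  haveI : Fact p.Prime := ⟨hp⟩
  haveI : Fact q.Prime := ⟨hq⟩
  have hq1 : 1 < q := hq.one_lt
  have hp1 : 1 < p := hp.one_lt
  have hpq : ¬ p ∣ q := fun h => hne ((Nat.prime_dvd_prime_iff_eq hp hq).mp h).symm
  have hqp : Nat.Coprime q p := (Nat.coprime_primes hq hp).mpr hne
  set u : (ZMod p)ˣ := ZMod.unitOfCoprime q hqp with hu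
  set d : ℕ := orderOf u with hd
  have hd0 : 0 < d := orderOf_pos u
  have hdvd : d ∣ p - 1 := by
    have h := orderOf_dvd_card (x := u)
    rwa [ZMod.card_units_eq_totient, Nat.totient_prime hp] at h
  have hdle : d ≤ p - 1 := Nat.le_of_dvd (by omega) hdvd
  have hqd1 : 1 < q ^ d := Nat.one_lt_pow hd0.ne' hq1
  have hpd : p ∣ q ^ d - 1 := by
    have h1 : ((q : ZMod p)) ^ d = 1 := by
      have : ((u ^ d : (ZMod p)ˣ) : ZMod p) = 1 := by rw [pow_orderOf_eq_one]; rfl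
      rwa [Units.val_pow_eq_pow_val, ZMod.coe_unitOfCoprime] at this
    have h2 : ((q ^ d - 1 : ℕ) : ZMod p) = 0 := by
      push_cast [Nat.cast_sub hqd1.le]
      rw [h1, sub_self]
    exact (ZMod.natCast_eq_zero_iff _ _).mp h2
  have hpqd : ¬ p ∣ q ^ d := fun h => hpq (hp.dvd_of_dvd_pow h)
  -- key per-k bound
  have key : ∀ k ∈ Finset.Ioc 0 n,
      (Finset.filter (fun i => d * p ^ i ∣ k) (Finset.range (n + 1))).card ≤
        padicValNat p (q ^ k - 1) := by
    intro k hk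
    rw [Finset.mem_Ioc] at hk
    by_cases hdk : d ∣ k
    · obtain ⟨m, rfl⟩ := hdk
      have hm0 : 0 < m := by
        rcases Nat.eq_zero_or_pos m with rfl | h
        · simp at hk
        · exact h
      have hlte : padicValNat p (q ^ (d * m) - 1) =
          padicValNat p (q ^ d - 1) + padicValNat p m := by
        have h := padicValNat.pow_sub_pow (p := p) hodd (x := q ^ d) (y := 1)
          hqd1 (by simpa using hpd) hpqd hm0.ne'
        simpa [← pow_mul, one_pow] using h
      have hvm : padicValNat p m ≤ n := by
        have h1 : p ^ padicValNat p m ∣ m := pow_padicValNat_dvd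
        have h2 : p ^ padicValNat p m ≤ m := Nat.le_of_dvd hm0 h1
        have h3 : padicValNat p m < p ^ padicValNat p m := Nat.lt_pow_self hp1
        have h4 : m ≤ d * m := Nat.le_mul_of_pos_left m hd0
        omega
      have hfilter : Finset.filter (fun i => d * p ^ i ∣ d * m) (Finset.range (n + 1)) =
          Finset.range (padicValNat p m + 1) := by
        ext i
        simp only [Finset.mem_filter, Finset.mem_range, Nat.lt_succ_iff,
          mul_dvd_mul_iff_left hd0.ne']
        constructor
        · rintro ⟨-, h⟩
          have := (Nat.Prime.pow_dvd_iff_le_factorization hp hm0.ne').mp h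
          rwa [Nat.factorization_def m hp] at this
        · intro h
          refine ⟨le_trans h hvm, (Nat.Prime.pow_dvd_iff_le_factorization hp hm0.ne').mpr ?_⟩
          rwa [Nat.factorization_def m hp]
      have hone : 1 ≤ padicValNat p (q ^ d - 1) := by
        have := (Nat.Prime.pow_dvd_iff_le_factorization hp (n := q ^ d - 1) (k := 1)
          (by omega)).mp (by rw [pow_one]; exact hpd)
        rwa [Nat.factorization_def _ hp] at this
      rw [hfilter, Finset.card_range, hlte]
      omega
    · have : Finset.filter (fun i => d * p ^ i ∣ k) (Finset.range (n + 1)) = ∅ := by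
        ext i
        simp only [Finset.mem_filter, Finset.notMem_empty, iff_false, not_and]
        exact fun _ h => hdk ((dvd_mul_right d (p ^ i)).trans h)
      simp [this]
  -- cardinality formula and valuation of the product
  have hcard : Nat.card (GL (Fin n) (ZMod q)) = ∏ i : Fin n, (q ^ n - q ^ (i : ℕ)) := by
    have h := Matrix.card_GL_field (𝔽 := ZMod q) (n := n)
    rwa [ZMod.card] at h
  have hne0 : ∀ i : Fin n, q ^ n - q ^ (i : ℕ) ≠ 0 := fun i => by
    have : q ^ (i : ℕ) < q ^ n := Nat.pow_lt_pow_right hq1 i.isLt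
    omega
  have hterm : ∀ i : Fin n, padicValNat p (q ^ n - q ^ (i : ℕ)) =
      padicValNat p (q ^ (n - (i : ℕ)) - 1) := by
    intro i
    have hi : (i : ℕ) < n := i.isLt
    have hfac : q ^ n - q ^ (i : ℕ) = q ^ (i : ℕ) * (q ^ (n - (i : ℕ)) - 1) := by
      rw [Nat.mul_sub, mul_one, ← pow_add, Nat.add_sub_cancel' hi.le]
    have h1 : 1 < q ^ (n - (i : ℕ)) := Nat.one_lt_pow (by omega) hq1
    rw [hfac, padicValNat.mul (pow_ne_zero _ (by omega)) (by omega),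
      padicValNat.eq_zero_of_not_dvd (fun h => hpq (hp.dvd_of_dvd_pow h)), zero_add]
  have hsum : padicValNat p (Nat.card (GL (Fin n) (ZMod q))) =
      ∑ k ∈ Finset.Ioc 0 n, padicValNat p (q ^ k - 1) := by
    rw [hcard, padicValNat_finset_prod _ _ (fun i _ => hne0 i),
      Finset.sum_congr rfl (fun i _ => hterm i),
      Fin.sum_univ_eq_sum_range (fun i => padicValNat p (q ^ (n - i) - 1)) n]
    refine Finset.sum_nbij' (fun i => n - i) (fun k => n - k) ?_ ?_ ?_ ?_ ?_
    · intro a ha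
      simp only [Finset.mem_range] at ha
      simp only [Finset.mem_Ioc]
      omega
    · intro a ha
      simp only [Finset.mem_Ioc] at ha
      simp only [Finset.mem_range]
      omega
    · intro a ha
      simp only [Finset.mem_range] at ha
      show n - (n - a) = a
      omega
    · intro a ha
      simp only [Finset.mem_Ioc] at ha
      show n - (n - a) = a
      omega
    · intro a ha
      rfl
  rw [ge_iff_le, hsum]
  calc ∑ i ∈ Finset.range (n + 1), n / ((p - 1) * p ^ i)
      ≤ ∑ i ∈ Finset.range (n + 1), n / (d * p ^ i) :=
        Finset.sum_le_sum fun i _ =>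
          Nat.div_le_div_left (Nat.mul_le_mul_right _ hdle) (by positivity)
    _ = ∑ i ∈ Finset.range (n + 1),
          (Finset.filter (fun k => d * p ^ i ∣ k) (Finset.Ioc 0 n)).card :=
        Finset.sum_congr rfl fun i _ => (Nat.Ioc_filter_dvd_card_eq_div n _).symm
    _ = ∑ k ∈ Finset.Ioc 0 n,
          (Finset.filter (fun i => d * p ^ i ∣ k) (Finset.range (n + 1))).card := by
        simp_rw [Finset.card_filter]
        exact Finset.sum_comm
    _ ≤ ∑ k ∈ Finset.Ioc 0 n, padicValNat p (q ^ k - 1) := Finset.sum_le_sum key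
end

section
/- Let p be an odd prime, let q be a prime different from p whose residue class generates the unit group (ZMod p²)ˣ (i.e., q is a primitive root modulo p²), and let n ≥ 1 be an integer. Then the p-adic valuation of the order of GL(Fin n, ZMod q) is exactly v_p(|GL(n, 𝔽_q)|) = ∑_{i≥0} ⌊n/((p-1)·p^i)⌋. -/
section aux
variable {p q : ℕ} (hp : p.Prime) (hodd : Odd p) (hq : q.Prime) (hne : q ≠ p)

include hq in
lemma pow_mod_iff (N k : ℕ) : ((q : ZMod N) ^ k = 1) ↔ N ∣ q ^ k - 1 := by
  have h1 : 1 ≤ q ^ k := Nat.one_le_pow _ _ hq.pos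
  rw [← Nat.cast_pow, ← Nat.cast_one, ZMod.natCast_eq_natCast_iff]
  exact ⟨fun h => (Nat.modEq_iff_dvd' h1).mp h.symm,
    fun h => ((Nat.modEq_iff_dvd' h1).mpr h).symm⟩

include hp hodd hq hne in
lemma order_aux (hgen : orderOf (q : ZMod (p ^ 2)) = Nat.totient (p ^ 2)) :
    orderOf (q : ZMod p) = p - 1 := by
  haveI : Fact p.Prime := ⟨hp⟩
  have hpq : ¬ p ∣ q := fun h => hne ((Nat.prime_dvd_prime_iff_eq hp hq).mp h).symm
  have hq0 : (q : ZMod p) ≠ 0 := by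
    rwa [Ne, ZMod.natCast_eq_zero_iff]
  set t := orderOf (q : ZMod p) with ht
  have ht1 : (q : ZMod p) ^ (p - 1) = 1 := ZMod.pow_card_sub_one_eq_one hq0
  have htd : t ∣ p - 1 := orderOf_dvd_of_pow_eq_one ht1
  have htpos : 0 < t := by
    refine orderOf_pos_iff.mpr ?_
    exact isOfFinOrder_iff_pow_eq_one.mpr ⟨p - 1, by have := hp.two_le; omega, ht1⟩
  -- totient p^2 = p * (p-1)
  have htot : Nat.totient (p ^ 2) = p * (p - 1) := by
    rw [Nat.totient_prime_pow hp (by norm_num)]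
    ring_nf
  -- p ∣ q^t - 1
  have hdt : p ∣ q ^ t - 1 := (pow_mod_iff hq p t).mp (pow_orderOf_eq_one _)
  have hxq : ¬ p ∣ q ^ t := fun h => hpq (hp.dvd_of_dvd_pow h)
  -- p^2 ∣ q^(t*p) - 1 by LTE
  have hlte := Nat.emultiplicity_pow_sub_pow hp hodd (x := q ^ t) (y := 1)
    (by simpa using hdt) hxq p
  have h2dvd : p ^ 2 ∣ q ^ (t * p) - 1 := by
    rw [pow_dvd_iff_le_emultiplicity]
    have e1 : (1 : ℕ∞) ≤ emultiplicity p (q ^ t - 1) := by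
      have h := pow_dvd_iff_le_emultiplicity (b := q ^ t - 1) (k := 1) (a := p)
      rw [pow_one] at h
      exact_mod_cast h.mp hdt
    have e2 : emultiplicity p p = 1 := by
      exact Nat.Prime.emultiplicity_self hp
    calc (2 : ℕ∞) = 1 + 1 := by norm_num
      _ ≤ emultiplicity p (q ^ t - 1) + emultiplicity p p := by
          rw [e2]; exact add_le_add e1 le_rfl
      _ = emultiplicity p ((q ^ t) ^ p - 1 ^ p) := hlte.symm
      _ = emultiplicity p (q ^ (t * p) - 1) := by rw [← pow_mul, one_pow]
  have h3 : orderOf (q : ZMod (p ^ 2)) ∣ t * p :=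
    orderOf_dvd_of_pow_eq_one ((pow_mod_iff hq (p ^ 2) (t * p)).mpr h2dvd)
  rw [hgen, htot] at h3
  have h4 : p - 1 ∣ t := by
    have : p * (p - 1) ∣ p * t := by rwa [mul_comm t p] at h3
    exact (mul_dvd_mul_iff_left hp.pos.ne').mp this
  exact Nat.dvd_antisymm htd h4


include hp hodd hq hne in
lemma val1_aux (hgen : orderOf (q : ZMod (p ^ 2)) = Nat.totient (p ^ 2)) :
    padicValNat p (q ^ (p - 1) - 1) = 1 := by
  haveI : Fact p.Prime := ⟨hp⟩
  have hq0 : (q : ZMod p) ≠ 0 := by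
    rw [Ne, ZMod.natCast_eq_zero_iff]
    exact fun h => hne ((Nat.prime_dvd_prime_iff_eq hp hq).mp h).symm
  have hne0 : q ^ (p - 1) - 1 ≠ 0 := by
    have : 1 < q ^ (p - 1) :=
      Nat.one_lt_pow (by have := hp.two_le; omega) hq.one_lt
    omega
  have hdvd : p ∣ q ^ (p - 1) - 1 :=
    (pow_mod_iff hq p (p - 1)).mp (ZMod.pow_card_sub_one_eq_one hq0)
  have hnot : ¬ p ^ 2 ∣ q ^ (p - 1) - 1 := by
    intro h
    have h1 : orderOf (q : ZMod (p ^ 2)) ∣ p - 1 :=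
      orderOf_dvd_of_pow_eq_one ((pow_mod_iff hq (p ^ 2) (p - 1)).mpr h)
    rw [hgen, Nat.totient_prime_pow hp (by norm_num)] at h1
    have h2 := Nat.le_of_dvd (by have := hp.two_le; omega) h1
    have h3 := hp.two_le
    have h4 : p ^ (2 - 1) * (p - 1) = p * (p - 1) := by norm_num
    rw [h4] at h2
    have h5 : 2 * (p - 1) ≤ p * (p - 1) := Nat.mul_le_mul_right _ h3
    omega
  have hle : 1 ≤ padicValNat p (q ^ (p - 1) - 1) := by
    rw [← padicValNat_dvd_iff_le hne0, pow_one]; exact hdvd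
  have hlt : ¬ 2 ≤ padicValNat p (q ^ (p - 1) - 1) := by
    rw [← padicValNat_dvd_iff_le hne0]; exact hnot
  omega

include hp hodd hq hne in
lemma valLTE_aux (hgen : orderOf (q : ZMod (p ^ 2)) = Nat.totient (p ^ 2))
    {m : ℕ} (hm : m ≠ 0) :
    padicValNat p (q ^ ((p - 1) * m) - 1) = 1 + padicValNat p m := by
  haveI : Fact p.Prime := ⟨hp⟩
  have hq0 : (q : ZMod p) ≠ 0 := by
    rw [Ne, ZMod.natCast_eq_zero_iff]
    exact fun h => hne ((Nat.prime_dvd_prime_iff_eq hp hq).mp h).symm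
  have hdvd : p ∣ q ^ (p - 1) - 1 :=
    (pow_mod_iff hq p (p - 1)).mp (ZMod.pow_card_sub_one_eq_one hq0)
  have hx : ¬ p ∣ q ^ (p - 1) := fun h => by
    have : p ∣ q := hp.dvd_of_dvd_pow h
    exact hne ((Nat.prime_dvd_prime_iff_eq hp hq).mp this).symm
  have hlte := Nat.emultiplicity_pow_sub_pow hp hodd (x := q ^ (p - 1)) (y := 1)
    (by simpa using hdvd) hx m
  rw [← pow_mul, one_pow] at hlte
  have hpos1 : 0 < q ^ ((p - 1) * m) - 1 := by
    have : 1 < q ^ ((p - 1) * m) := Nat.one_lt_pow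
      (by have := hp.two_le; exact Nat.mul_ne_zero (by omega) hm) hq.one_lt
    omega
  have hpos2 : 0 < q ^ (p - 1) - 1 := by
    have : 1 < q ^ (p - 1) :=
      Nat.one_lt_pow (by have := hp.two_le; omega) hq.one_lt
    omega
  rw [← padicValNat_eq_emultiplicity hpos1.ne', ← padicValNat_eq_emultiplicity hpos2.ne',
    ← padicValNat_eq_emultiplicity hm] at hlte
  have := val1_aux hp hodd hq hne hgen
  rw [this] at hlte
  exact_mod_cast hlte

include hp hodd hq hne in
lemma valzero_aux (hgen : orderOf (q : ZMod (p ^ 2)) = Nat.totient (p ^ 2))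
    {k : ℕ} (hk : ¬ (p - 1) ∣ k) :
    padicValNat p (q ^ k - 1) = 0 := by
  apply padicValNat.eq_zero_of_not_dvd
  intro h
  have h1 : (q : ZMod p) ^ k = 1 := (pow_mod_iff hq p k).mpr h
  have h2 : orderOf (q : ZMod p) ∣ k := orderOf_dvd_of_pow_eq_one h1
  rw [order_aux hp hodd hq hne hgen] at h2
  exact hk h2
end aux

open Matrix

/-- Remark 3.4: if `q` is a primitive root modulo `p²` (i.e., the multiplicative
order of `q` in `ZMod (p²)` equals `φ(p²)`), then
`v_p(|GL(n, 𝔽_q)|) = ∑_{i≥0} ⌊n/((p-1)p^i)⌋`. -/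
theorem padicValNat_card_GL_eq_of_primitiveRoot
    (p q : ℕ) (hp : p.Prime) (hodd : Odd p) (hq : q.Prime) (hne : q ≠ p)
    (hgen : orderOf (q : ZMod (p ^ 2)) = Nat.totient (p ^ 2))
    (n : ℕ) (hn : 1 ≤ n) :
    padicValNat p (Nat.card (GL (Fin n) (ZMod q))) =
      ∑ i ∈ Finset.range (n + 1), n / ((p - 1) * p ^ i) := by
  haveI : Fact p.Prime := ⟨hp⟩
  haveI : Fact q.Prime := ⟨hq⟩
  have hd0 : 0 < p - 1 := by have := hp.two_le; omega
  set M := n / (p - 1) with hM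
  -- Step 1: cardinality of GL
  have hcard : Nat.card (GL (Fin n) (ZMod q)) = ∏ i : Fin n, (q ^ n - q ^ (i : ℕ)) := by
    rw [Matrix.card_GL_field]
    simp [ZMod.card]
  have hfac : ∀ i : Fin n, q ^ n - q ^ (i : ℕ) ≠ 0 := fun i => by
    have : q ^ (i : ℕ) < q ^ n := Nat.pow_lt_pow_right hq.one_lt i.isLt
    omega
  -- Step 2: valuation of the product
  have hval : padicValNat p (∏ i : Fin n, (q ^ n - q ^ (i : ℕ))) =
      ∑ i : Fin n, padicValNat p (q ^ n - q ^ (i : ℕ)) := by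
    rw [← Nat.factorization_def _ hp, Nat.factorization_prod (fun i _ => hfac i),
      Finsupp.finset_sum_apply]
    exact Finset.sum_congr rfl fun i _ => Nat.factorization_def _ hp
  have hpq : ¬ p ∣ q := fun h => hne ((Nat.prime_dvd_prime_iff_eq hp hq).mp h).symm
  have hterm : ∀ i : Fin n, padicValNat p (q ^ n - q ^ (i : ℕ)) =
      padicValNat p (q ^ (n - (i : ℕ)) - 1) := fun i => by
    have hsplit : q ^ n - q ^ (i : ℕ) = q ^ (i : ℕ) * (q ^ (n - (i : ℕ)) - 1) := by
      rw [Nat.mul_sub, mul_one, ← pow_add]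
      congr 2
      omega
    have hne1 : q ^ (n - (i : ℕ)) - 1 ≠ 0 := by
      have : 1 < q ^ (n - (i : ℕ)) :=
        Nat.one_lt_pow (by omega) hq.one_lt
      omega
    rw [hsplit, padicValNat.mul (pow_ne_zero _ hq.pos.ne') hne1,
      padicValNat.eq_zero_of_not_dvd (fun h => hpq (hp.dvd_of_dvd_pow h)), zero_add]
  -- Step 3: reindex to ∑_{k=1}^{n} v_p(q^k - 1)
  have hsum1 : ∑ i : Fin n, padicValNat p (q ^ (n - (i : ℕ)) - 1) =
      ∑ k ∈ Finset.Icc 1 n, padicValNat p (q ^ k - 1) := by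
    rw [Fin.sum_univ_eq_sum_range (fun i => padicValNat p (q ^ (n - i) - 1)) n]
    have h1 : ∑ i ∈ Finset.range n, padicValNat p (q ^ (n - i) - 1) =
        ∑ i ∈ Finset.range n, padicValNat p (q ^ (n - 1 - i + 1) - 1) := by
      refine Finset.sum_congr rfl fun i hi => ?_
      have := Finset.mem_range.mp hi
      have he : n - i = n - 1 - i + 1 := by omega
      rw [he]
    rw [h1, Finset.sum_range_reflect (fun i => padicValNat p (q ^ (i + 1) - 1)) n,
      ← Finset.Ico_add_one_right_eq_Icc, Finset.sum_Ico_eq_sum_range]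
    refine Finset.sum_congr (by congr 1) fun i _ => by rw [add_comm 1 i]
  -- Step 4: keep only multiples of p - 1
  have hfilter : ∑ k ∈ Finset.Icc 1 n, padicValNat p (q ^ k - 1) =
      ∑ k ∈ (Finset.Icc 1 n).filter (fun k => (p - 1) ∣ k), padicValNat p (q ^ k - 1) :=
    (Finset.sum_filter_of_ne (fun k _ hv => by
      by_contra hdk
      exact hv (valzero_aux hp hodd hq hne hgen hdk))).symm
  have himg : (Finset.Icc 1 n).filter (fun k => (p - 1) ∣ k) =
      (Finset.Icc 1 M).image (fun m => (p - 1) * m) := by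
    ext k
    simp only [Finset.mem_filter, Finset.mem_image, Finset.mem_Icc]
    constructor
    · rintro ⟨⟨h1, h2⟩, c, rfl⟩
      have hc : c ≠ 0 := by rintro rfl; simp at h1
      refine ⟨c, ⟨by omega, (Nat.le_div_iff_mul_le hd0).mpr ?_⟩, rfl⟩
      rwa [mul_comm]
    · rintro ⟨m, ⟨h1, h2⟩, rfl⟩
      refine ⟨⟨Nat.one_le_iff_ne_zero.mpr (Nat.mul_ne_zero hd0.ne' (by omega)), ?_⟩,
        Dvd.intro m rfl⟩
      rw [mul_comm]
      exact (Nat.le_div_iff_mul_le hd0).mp h2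
  have hsum2 : ∑ k ∈ (Finset.Icc 1 M).image (fun m => (p - 1) * m),
      padicValNat p (q ^ k - 1) =
      ∑ m ∈ Finset.Icc 1 M, padicValNat p (q ^ ((p - 1) * m) - 1) :=
    Finset.sum_image (fun a _ b _ h => Nat.eq_of_mul_eq_mul_left hd0 h)
  -- Step 5: LTE on each term
  have hsum3 : ∑ m ∈ Finset.Icc 1 M, padicValNat p (q ^ ((p - 1) * m) - 1) =
      ∑ m ∈ Finset.Icc 1 M, (1 + padicValNat p m) := by
    refine Finset.sum_congr rfl fun m hm => ?_
    have := (Finset.mem_Icc.mp hm).1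
    exact valLTE_aux hp hodd hq hne hgen (by omega)
  have hsum4 : ∑ m ∈ Finset.Icc 1 M, (1 + padicValNat p m) =
      M + padicValNat p (Nat.factorial M) := by
    have hfactsum : padicValNat p (Nat.factorial M) = ∑ m ∈ Finset.Icc 1 M, padicValNat p m := by
      conv_lhs => rw [← Finset.prod_Ico_id_eq_factorial M]
      rw [← Nat.factorization_def _ hp,
        Nat.factorization_prod (fun x hx => by
          have := (Finset.mem_Ico.mp hx).1; omega),
        Finsupp.finset_sum_apply, Finset.Ico_add_one_right_eq_Icc]
      exact Finset.sum_congr rfl fun m _ => Nat.factorization_def _ hp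
    rw [Finset.sum_add_distrib, Finset.sum_const, Nat.card_Icc, smul_eq_mul, mul_one, hfactsum, Nat.add_sub_cancel]
  -- Step 6: Legendre
  have hleg : padicValNat p (Nat.factorial M) = ∑ i ∈ Finset.Ico 1 (n + 1), M / p ^ i :=
    padicValNat_factorial (lt_of_le_of_lt ((Nat.log_le_self p M).trans (Nat.div_le_self n _))
      (Nat.lt_succ_self n))
  -- Put everything together
  rw [hcard, hval]
  rw [Finset.sum_congr rfl fun i _ => hterm i, hsum1, hfilter, himg, hsum2, hsum3, hsum4, hleg]
  rw [Finset.range_eq_Ico, Finset.sum_eq_sum_Ico_succ_bot (Nat.succ_pos n)]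
  congr 1
  · rw [pow_zero, mul_one]
  · exact Finset.sum_congr rfl fun i _ => by rw [hM, Nat.div_div_eq_div_mul]
end

section
/- Let q be a prime with q ≡ 3 (mod 8) and let n ≥ 1 be an integer. Then the 2-adic valuation of the order of GL(Fin n, ZMod q) is exactly v_2(|GL(n, 𝔽_q)|) = n + 2·⌊n/2⌋ + ∑_{i≥2} ⌊n/2^i⌋. -/
open Matrix

/-- `v_2(2^a * t) = a` for odd `t`. -/
private lemma val2_pow_mul_odd (a t : ℕ) (ht : Odd t) :
    padicValNat 2 (2 ^ a * t) = a := by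
  have ht0 : t ≠ 0 := by rintro rfl; simp at ht
  have ht1 := Nat.odd_iff.mp ht
  rw [padicValNat.mul (by positivity) ht0, padicValNat.prime_pow,
    padicValNat.eq_zero_of_not_dvd (by omega)]
  omega

private lemma val2_of_mod_four (m : ℕ) (hm : m % 4 = 2) : padicValNat 2 m = 1 := by
  have : m = 2 ^ 1 * (m / 2) := by omega
  rw [this, val2_pow_mul_odd]
  exact Nat.odd_iff.mpr (by omega)

private lemma val2_of_mod_eight (m : ℕ) (hm : m % 8 = 4) : padicValNat 2 m = 2 := by
  have : m = 2 ^ 2 * (m / 4) := by omega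
  rw [this, val2_pow_mul_odd]
  exact Nat.odd_iff.mpr (by omega)

/-- For `q ≡ 3 (mod 8)` and odd `k`, `v_2(q^k - 1) = 1`. -/
private lemma val2_pow_sub_one_odd (q : ℕ) (hq8 : q % 8 = 3) {k : ℕ} (hk : Odd k) :
    padicValNat 2 (q ^ k - 1) = 1 := by
  obtain ⟨m, rfl⟩ := hk
  have hq4 : q % 4 = 3 := by omega
  have h3 : (3 : ℕ) ^ (2 * m) % 4 = 1 := by
    rw [pow_mul, Nat.pow_mod]; norm_num
  have hmod : q ^ (2 * m + 1) % 4 = 3 := by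
    rw [Nat.pow_mod, hq4, pow_succ, Nat.mul_mod, h3]
  have hq1 : 1 ≤ q := by omega
  have h1 : 1 ≤ q ^ (2 * m + 1) := Nat.one_le_pow _ _ (by omega)
  apply val2_of_mod_four
  omega

/-- For `q ≡ 3 (mod 8)` and even `k ≠ 0`, `v_2(q^k - 1) = 2 + v_2(k)`. -/
private lemma val2_pow_sub_one_even (q : ℕ) (hq8 : q % 8 = 3) {k : ℕ} (hk : Even k)
    (hk0 : k ≠ 0) : padicValNat 2 (q ^ k - 1) = 2 + padicValNat 2 k := by
  have key := padicValNat.pow_two_sub_pow (x := q) (y := 1) (by omega)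
    (by omega) (by omega) hk0 hk
  rw [one_pow] at key
  rw [val2_of_mod_eight (q + 1) (by omega), val2_of_mod_four (q - 1) (by omega)] at key
  omega

private lemma val2_pow_sub_one (q : ℕ) (hq8 : q % 8 = 3) (k : ℕ) (hk0 : k ≠ 0) :
    padicValNat 2 (q ^ k - 1) =
      1 + (if 2 ∣ k then 1 else 0) + padicValNat 2 k := by
  rcases Nat.even_or_odd k with hk | hk
  · rw [val2_pow_sub_one_even q hq8 hk hk0, if_pos hk.two_dvd]
  · have hk1 := Nat.odd_iff.mp hk
    rw [val2_pow_sub_one_odd q hq8 hk, if_neg (by omega),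
      padicValNat.eq_zero_of_not_dvd (by omega)]

private lemma sum_val2 (n : ℕ) :
    ∑ k ∈ Finset.range n, padicValNat 2 (k + 1) = padicValNat 2 n.factorial := by
  induction n with
  | zero => simp
  | succ n ih =>
    rw [Finset.sum_range_succ, ih, Nat.factorial_succ,
      padicValNat.mul (by omega) n.factorial_ne_zero]
    omega

private lemma count_even (n : ℕ) :
    ∑ k ∈ Finset.range n, (if 2 ∣ (k + 1) then 1 else 0) = n / 2 := by
  induction n with
  | zero => simp
  | succ n ih =>
    rw [Finset.sum_range_succ, ih]
    rcases Nat.even_or_odd n with h | h <;>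
      · obtain ⟨m, rfl⟩ := h
        split_ifs <;> omega

/-- Remark 3.4, `p = 2`: for a prime `q ≡ 3 (mod 8)`,
`v_2(|GL(n, 𝔽_q)|) = n + 2⌊n/2⌋ + ∑_{i≥2} ⌊n/2^i⌋`. -/
theorem padicValNat_two_card_GL_of_three_mod_eight
    (q : ℕ) (hq : q.Prime) (hq8 : q % 8 = 3) (n : ℕ) (hn : 1 ≤ n) :
    padicValNat 2 (Nat.card (GL (Fin n) (ZMod q))) =
      n + 2 * (n / 2) + ∑ i ∈ Finset.range (n + 1), n / 2 ^ (i + 2) := by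
  haveI : Fact q.Prime := ⟨hq⟩
  have hq1 : 1 < q := hq.one_lt
  -- cardinality of GL
  have hcard : Nat.card (GL (Fin n) (ZMod q)) = ∏ i : Fin n, (q ^ n - q ^ (i : ℕ)) := by
    rw [Matrix.card_GL_field, ZMod.card]
  rw [hcard]
  -- each factor
  have hfac : ∀ i : Fin n, q ^ n - q ^ (i : ℕ) = q ^ (i : ℕ) * (q ^ (n - i) - 1) := by
    intro i
    rw [Nat.mul_sub, mul_one, ← pow_add]
    congr 2
    omega
  have hne : ∀ i : Fin n, q ^ n - q ^ (i : ℕ) ≠ 0 := by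
    intro i
    have : q ^ (i : ℕ) < q ^ n := Nat.pow_lt_pow_right hq1 i.isLt
    omega
  -- valuation of the product
  have hvalprod : padicValNat 2 (∏ i : Fin n, (q ^ n - q ^ (i : ℕ))) =
      ∑ i : Fin n, padicValNat 2 (q ^ n - q ^ (i : ℕ)) := by
    rw [← Nat.factorization_def _ Nat.prime_two, Nat.factorization_prod (fun x _ => hne x)]
    simp only [Finset.sum_apply', Nat.factorization_def _ Nat.prime_two]
  rw [hvalprod]
  have hvalfac : ∀ i : Fin n, padicValNat 2 (q ^ n - q ^ (i : ℕ)) =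
      padicValNat 2 (q ^ (n - (i : ℕ)) - 1) := by
    intro i
    rw [hfac i, padicValNat.mul (by positivity)
      (by have : 1 < q ^ (n - (i : ℕ)) := Nat.one_lt_pow (by omega) hq1; omega),
      padicValNat.eq_zero_of_not_dvd]
    · omega
    · intro h
      have h2 : (2 : ℕ) ∣ q := Nat.Prime.dvd_of_dvd_pow Nat.prime_two h
      omega
  simp only [hvalfac]
  -- reindex the sum
  have hre : ∑ i : Fin n, padicValNat 2 (q ^ (n - (i : ℕ)) - 1) =
      ∑ k ∈ Finset.range n, padicValNat 2 (q ^ (k + 1) - 1) := by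
    rw [Fin.sum_univ_eq_sum_range (fun k => padicValNat 2 (q ^ (n - k) - 1)) n]
    rw [← Finset.sum_range_reflect]
    apply Finset.sum_congr rfl
    intro j hj
    rw [Finset.mem_range] at hj
    have h : n - (n - 1 - j) = j + 1 := by omega
    rw [h]
  rw [hre]
  have hsplit : ∀ k ∈ Finset.range n, padicValNat 2 (q ^ (k + 1) - 1) =
      1 + (if 2 ∣ (k + 1) then 1 else 0) + padicValNat 2 (k + 1) :=
    fun k _ => val2_pow_sub_one q hq8 (k + 1) (by omega)
  rw [Finset.sum_congr rfl hsplit]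
  rw [Finset.sum_add_distrib, Finset.sum_add_distrib, Finset.sum_const, Finset.card_range,
    smul_eq_mul, mul_one, count_even, sum_val2]
  -- Legendre
  have hlog : Nat.log 2 n < n + 3 := lt_of_le_of_lt (Nat.log_le_self 2 n) (by omega)
  rw [padicValNat_factorial hlog]
  have : Finset.Ico 1 (n + 3) = insert 1 (Finset.Ico 2 (n + 3)) := by
    ext x
    simp only [Finset.mem_Ico, Finset.mem_insert]
    omega
  rw [this, Finset.sum_insert (by simp), pow_one]
  rw [Finset.sum_Ico_eq_sum_range]
  have h2 : n + 3 - 2 = n + 1 := by omega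
  rw [h2]
  have : ∀ i ∈ Finset.range (n + 1), n / 2 ^ (2 + i) = n / 2 ^ (i + 2) := by
    intro i _; rw [Nat.add_comm]
  rw [Finset.sum_congr rfl this]
  omega
end

section
/- Let q be a prime with q ≡ 5 (mod 8) and let n ≥ 1 be an integer. Then the 2-adic valuation of the order of GL(Fin n, ZMod q) is exactly v_2(|GL(n, 𝔽_q)|) = 2n + ∑_{i≥1} ⌊n/2^i⌋. -/
open Matrix Finset

-- valuation of a finite product
lemma padicValNat_prod {p : ℕ} [Fact p.Prime] {s : Finset ℕ} (f : ℕ → ℕ)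
    (hf : ∀ i ∈ s, f i ≠ 0) :
    padicValNat p (∏ i ∈ s, f i) = ∑ i ∈ s, padicValNat p (f i) := by
  classical
  induction s using Finset.induction with
  | empty => simp
  | insert a s hx ih =>
    rw [Finset.prod_insert hx, Finset.sum_insert hx,
      padicValNat.mul (hf a (mem_insert_self a s))
        (Finset.prod_ne_zero_iff.mpr fun i hi => hf i (mem_insert_of_mem hi)),
      ih fun i hi => hf i (mem_insert_of_mem hi)]

lemma v2_of_mod4 {m : ℕ} (h : m % 4 = 2) : padicValNat 2 m = 1 := by
  obtain ⟨k, hk⟩ : ∃ k, m = 2 * (2 * k + 1) := ⟨m / 4, by omega⟩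
  subst hk
  rw [padicValNat.mul (by norm_num) (by omega), padicValNat.self (by norm_num),
    padicValNat.eq_zero_of_not_dvd (by omega)]

lemma v2_of_mod8 {m : ℕ} (h : m % 8 = 4) : padicValNat 2 m = 2 := by
  obtain ⟨k, hk⟩ : ∃ k, m = 4 * (2 * k + 1) := ⟨m / 8, by omega⟩
  subst hk
  rw [show (4 : ℕ) = 2 ^ 2 from rfl, padicValNat.mul (by norm_num) (by omega),
    padicValNat.prime_pow, padicValNat.eq_zero_of_not_dvd (by omega)]

lemma pow_mod8 {q : ℕ} (hq8 : q % 8 = 5) (j : ℕ) :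
    q ^ j % 8 = if Odd j then 5 else 1 := by
  induction j with
  | zero => simp
  | succ j ih =>
    rw [pow_succ, Nat.mul_mod, ih, hq8]
    rcases Nat.even_or_odd j with h | h
    · simp [Nat.not_odd_iff_even.mpr h, Nat.odd_add_one, Nat.not_odd_iff_even.mpr h]
    · simp [h, Nat.odd_add_one, Nat.not_even_iff_odd.mpr h]

lemma v2_pow_sub_one {q : ℕ} (hq : q.Prime) (hq8 : q % 8 = 5) {j : ℕ} (hj : 1 ≤ j) :
    padicValNat 2 (q ^ j - 1) = 2 + padicValNat 2 j := by
  rcases Nat.even_or_odd j with hje | hjo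
  · have h1 : padicValNat 2 (q ^ j - 1) + 1 =
        padicValNat 2 (q + 1) + padicValNat 2 (q - 1) + padicValNat 2 j := by
      have := padicValNat.pow_two_sub_pow (x := q) (y := 1)
        (by omega) (by omega) (by omega) (by omega) hje
      simpa using this
    have h2 : padicValNat 2 (q + 1) = 1 := v2_of_mod4 (by omega)
    have h3 : padicValNat 2 (q - 1) = 2 := v2_of_mod8 (by omega)
    omega
  · have h4 : q ^ j % 8 = 5 := by rw [pow_mod8 hq8]; simp [hjo]
    have h5 : (q ^ j - 1) % 8 = 4 := by
      have : 1 ≤ q ^ j := Nat.one_le_pow _ _ hq.pos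
      omega
    rw [v2_of_mod8 h5, padicValNat.eq_zero_of_not_dvd (by
      rcases hjo with ⟨k, rfl⟩; omega)]

/-- Remark 3.5: for a prime `q ≡ 5 (mod 8)`,
`v_2(|GL(n, 𝔽_q)|) = 2n + ∑_{i≥1} ⌊n/2^i⌋`. -/
theorem padicValNat_two_card_GL_of_five_mod_eight
    (q : ℕ) (hq : q.Prime) (hq8 : q % 8 = 5) (n : ℕ) (hn : 1 ≤ n) :
    padicValNat 2 (Nat.card (GL (Fin n) (ZMod q))) =
      2 * n + ∑ i ∈ Finset.range (n + 1), n / 2 ^ (i + 1) := by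
  haveI : Fact q.Prime := ⟨hq⟩
  haveI : Fact (Nat.Prime 2) := ⟨Nat.prime_two⟩
  have hcard : Fintype.card (ZMod q) = q := ZMod.card q
  rw [Matrix.card_GL_field, hcard, Fin.prod_univ_eq_prod_range (fun i => q ^ n - q ^ i)]
  have hq1 : 1 < q := hq.one_lt
  have hterm : ∀ i ∈ Finset.range n,
      padicValNat 2 (q ^ n - q ^ i) = 2 + padicValNat 2 (n - i) := by
    intro i hi
    rw [Finset.mem_range] at hi
    have key : q ^ n - q ^ i = q ^ i * (q ^ (n - i) - 1) := by
      rw [Nat.mul_sub_one, ← pow_add, Nat.add_sub_cancel' hi.le]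
    have hqi : ¬ 2 ∣ q ^ i := by
      intro h
      have := (Nat.Prime.dvd_of_dvd_pow Nat.prime_two h)
      omega
    have hji : 1 ≤ n - i := by omega
    have hpow : 1 < q ^ (n - i) := Nat.one_lt_pow (by omega) hq1
    rw [key, padicValNat.mul (Nat.pos_of_ne_zero ?_).ne' (by omega),
      padicValNat.eq_zero_of_not_dvd hqi, v2_pow_sub_one hq hq8 hji, zero_add]
    exact (Nat.pos_of_ne_zero (by positivity)).ne'
  rw [padicValNat_prod _ (fun i hi => by
    rw [Finset.mem_range] at hi
    have : q ^ i < q ^ n := Nat.pow_lt_pow_right hq1 hi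
    omega)]
  rw [Finset.sum_congr rfl hterm, Finset.sum_add_distrib, Finset.sum_const,
    Finset.card_range, smul_eq_mul, mul_comm n 2]
  congr 1
  have hrefl : ∑ i ∈ Finset.range n, padicValNat 2 (n - i)
      = ∑ j ∈ Finset.range n, padicValNat 2 (j + 1) := by
    rw [← Finset.sum_range_reflect]
    apply Finset.sum_congr rfl
    intro j hj
    rw [Finset.mem_range] at hj
    congr 1
    omega
  rw [hrefl, ← padicValNat_prod (fun j => j + 1) (fun j _ => Nat.succ_ne_zero j),
    Finset.prod_range_add_one_eq_factorial,
    padicValNat_factorial (b := n + 2) (by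
      have := Nat.log_le_self 2 n
      omega),
    Finset.sum_Ico_eq_sum_range]
  simp [add_comm]
end
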